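/- Suppose λ ∈ ℝ^m satisfies Aλ = −a_j, λ ≥ 0, and −uᵀλ = l_j, and suppose l_j > u_j. Then x := λ + e_j satisfies Ax = 0 and uᵀx₊ − lᵀx₋ < 0, i.e., x is a certificate of infeasibility for the system l ≤ Aᵀy ≤ u. -/

import Mathlib

open Matrix

/-- If `Aλ = -a_j`, `λ ≥ 0`, `-uᵀλ = l_j`, and `l_j > u_j`, then
`x := λ + e_j` satisfies `Ax = 0` and `uᵀx₊ - lᵀx₋ < 0`, i.e. it certifies infeasibility of
`l ≤ Aᵀy ≤ u`. -/
theorem stmt_4 {n m : ℕ} (A : Matrix (Fin n) (Fin m) ℝ) (u l : Fin m → ℝ)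
    (j : Fin m) (lam : Fin m → ℝ)
    (hlam : A *ᵥ lam = -(fun k => A k j))
    (hlampos : 0 ≤ lam)
    (hbound : -(u ⬝ᵥ lam) = l j)
    (hlu : l j > u j)
    (x : Fin m → ℝ) (hx : x = lam + Pi.single j 1) :
    A *ᵥ x = 0 ∧
      u ⬝ᵥ (fun i => max (x i) 0) - l ⬝ᵥ (fun i => max (-x i) 0) < 0 := by
  have hxnn : ∀ i, 0 ≤ x i := by
    intro i
    rw [hx]
    have h1 : 0 ≤ lam i := hlampos i
    have h2 : (0:ℝ) ≤ Pi.single (M := fun _ : Fin m => ℝ) j 1 i := by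
      rcases eq_or_ne i j with h | h
      · subst h; simp
      · simp [Pi.single_eq_of_ne h]
    simpa using add_nonneg h1 h2
  constructor
  · rw [hx, mulVec_add, hlam]
    ext k
    have : (A *ᵥ Pi.single j 1) k = A k j := by
      simp [mulVec_single]
    simp [this]
  · have hpos : (fun i => max (x i) 0) = x := by
      funext i; exact max_eq_left (hxnn i)
    have hneg : (fun i => max (-x i) 0) = 0 := by
      funext i; simp [max_eq_right, neg_nonpos.mpr (hxnn i)]
    rw [hpos, hneg, dotProduct_zero, sub_zero, hx, dotProduct_add,
      dotProduct_single]
    have : u ⬝ᵥ lam = -(l j) := by linarith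
    rw [this]
    linarith
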